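/- The complement in ℝ² of the lollipop L (the segment from (0,0) to (0,1) union the circle of radius 1 centered at (0,2)) has exactly two connected components: the open disk {x | dist x (0,2) < 1} and its unbounded complement. -/

import Mathlib

open Metric Set

namespace Stmt5Aux

noncomputable section

abbrev E2 := EuclideanSpace ℝ (Fin 2)

def cc : E2 := !₂[0, 2]

def Seg : Set E2 := segment ℝ (!₂[0, 0] : E2) !₂[0, 1]

def LL : Set E2 := Seg ∪ sphere cc 1

def UU : Set E2 := LLᶜ \ ball cc 1

lemma dist_eq' (x y : E2) : dist x y = Real.sqrt ((x 0 - y 0)^2 + (x 1 - y 1)^2) := by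
  rw [EuclideanSpace.dist_eq, Fin.sum_univ_two]
  simp [Real.dist_eq, sq_abs]

lemma cc0 : cc 0 = 0 := rfl
lemma cc1 : cc 1 = 2 := rfl

lemma dist_cc (x : E2) (h : x 0 = 0) : dist x cc = |x 1 - 2| := by
  rw [dist_eq', h, cc0, cc1]
  rw [show (0 - 0 : ℝ)^2 + (x 1 - 2)^2 = (x 1 - 2)^2 by ring]
  exact Real.sqrt_sq_eq_abs _

lemma mem_seg_iff (y : E2) : y ∈ Seg ↔ y 0 = 0 ∧ 0 ≤ y 1 ∧ y 1 ≤ 1 := by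
  rw [Seg, segment_eq_image]
  constructor
  · rintro ⟨t, ht, rfl⟩
    simp only [mem_Icc] at ht
    refine ⟨?_, ?_, ?_⟩ <;>
      simp [PiLp.add_apply, PiLp.smul_apply, ht.1, ht.2]
  · rintro ⟨h0, h1, h2⟩
    refine ⟨y 1, mem_Icc.2 ⟨h1, h2⟩, ?_⟩
    ext i
    fin_cases i <;>
      simp [PiLp.add_apply, PiLp.smul_apply, h0]

def qq : E2 := !₂[0, -1]

lemma qq_dist : dist qq cc = 3 := by
  rw [dist_cc qq rfl]
  norm_num [show qq 1 = -1 from rfl]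

lemma mem_UU_iff (x : E2) : x ∈ UU ↔ x ∉ Seg ∧ 1 < dist x cc := by
  simp only [UU, LL, mem_diff, mem_compl_iff, mem_union, mem_sphere, mem_ball, not_or]
  constructor
  · rintro ⟨⟨hs, hc⟩, hb⟩
    exact ⟨hs, lt_of_le_of_ne (not_lt.1 hb) (Ne.symm hc)⟩
  · rintro ⟨hs, hd⟩
    exact ⟨⟨hs, by linarith⟩, by simp; linarith⟩

/-- The key ray lemma: scaling out from the center stays in `UU`. -/
lemma ray_mem {x : E2} (hx : x ∈ UU) {s : ℝ} (h1 : 1 < s * dist x cc)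
    (h2 : 1 ≤ s ∨ 3 ≤ s * dist x cc) : cc + s • (x - cc) ∈ UU := by
  obtain ⟨hseg, hd⟩ := (mem_UU_iff x).1 hx
  have hd0 : (0:ℝ) < dist x cc := by linarith
  have hs0 : 0 < s := by
    rcases h2 with h | h
    · linarith
    · nlinarith
  have hdist : dist (cc + s • (x - cc)) cc = s * dist x cc := by
    rw [dist_eq_norm, add_sub_cancel_left, norm_smul, Real.norm_eq_abs,
      abs_of_pos hs0, ← dist_eq_norm]
  rw [mem_UU_iff]
  refine ⟨?_, by rw [hdist]; exact h1⟩
  intro hmem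
  rw [mem_seg_iff] at hmem
  obtain ⟨p0, p1, p2⟩ := hmem
  have e0 : (cc + s • (x - cc)) 0 = s * x 0 := by
    simp [PiLp.add_apply, PiLp.smul_apply, PiLp.sub_apply, cc0]
  have e1 : (cc + s • (x - cc)) 1 = 2 + s * (x 1 - 2) := by
    simp [PiLp.add_apply, PiLp.smul_apply, PiLp.sub_apply, cc1]
  rw [e0] at p0
  rw [e1] at p1 p2
  have hx0 : x 0 = 0 := by
    rcases mul_eq_zero.1 p0 with h | h
    · exact absurd h (ne_of_gt hs0)
    · exact h
  have hdx : |x 1 - 2| > 1 := by rw [← dist_cc x hx0]; exact hd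
  have hx12 : x 1 < 2 := by nlinarith
  have habs : 2 - x 1 > 1 := by
    rcases abs_cases (x 1 - 2) with ⟨h, _⟩ | ⟨h, _⟩ <;> [linarith [hdx, h.symm ▸ hdx]; linarith [h ▸ hdx]]
  -- from p1 : 0 ≤ 2 + s * (x 1 - 2), i.e. s * (2 - x 1) ≤ 2
  have hb : s * (2 - x 1) ≤ 2 := by linarith
  rcases h2 with h | h
  · -- 1 ≤ s : then 0 ≤ x 1 and x ∈ Seg, contradiction
    have hx1nn : 0 ≤ x 1 := by nlinarith
    exact hseg ((mem_seg_iff x).2 ⟨hx0, hx1nn, by linarith⟩)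
  · -- 3 ≤ s * dist x cc = s * (2 - x 1) ≤ 2, contradiction
    have : dist x cc = 2 - x 1 := by
      rw [dist_cc x hx0, abs_of_neg (by linarith : x 1 - 2 < 0)]; ring
    rw [this] at h; linarith

lemma sphere3_subset : sphere cc 3 ⊆ UU := by
  intro y hy
  rw [mem_sphere] at hy
  rw [mem_UU_iff]
  constructor
  · intro hmem
    obtain ⟨h0, h1, h2⟩ := (mem_seg_iff y).1 hmem
    have h3 := dist_cc y h0
    rw [hy] at h3
    rcases abs_cases (y 1 - 2) with ⟨h, _⟩ | ⟨h, _⟩ <;> rw [h] at h3 <;> linarith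
  · rw [hy]; norm_num

lemma joined_to_sphere {x : E2} (hx : x ∈ UU) :
    JoinedIn UU x (cc + (3 / dist x cc) • (x - cc)) := by
  obtain ⟨hseg, hd⟩ := (mem_UU_iff x).1 hx
  have hd0 : (0:ℝ) < dist x cc := by linarith
  set d := dist x cc with hdd
  refine ⟨⟨⟨fun t => cc + ((1 - (t:ℝ)) + (t:ℝ) * (3 / d)) • (x - cc), by fun_prop⟩, ?_, ?_⟩, ?_⟩
  · simp
  · simp
  · intro t
    show cc + ((1 - (t:ℝ)) + (t:ℝ) * (3 / d)) • (x - cc) ∈ UU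
    set s : ℝ := (1 - (t:ℝ)) + (t:ℝ) * (3 / d) with hs
    have ht0 : (0:ℝ) ≤ t := t.2.1
    have ht1 : (t:ℝ) ≤ 1 := t.2.2
    have h3d : 3 / d * d = 3 := div_mul_cancel₀ 3 (ne_of_gt hd0)
    have hsd : s * d = (1 - (t:ℝ)) * d + (t:ℝ) * 3 := by
      rw [hs, add_mul, mul_assoc, h3d]
    have h1 : 1 < s * d := by
      rw [hsd]
      nlinarith [mul_nonneg (by linarith : (0:ℝ) ≤ 1 - (t:ℝ)) (by linarith : (0:ℝ) ≤ d - 1)]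
    have h2 : 1 ≤ s ∨ 3 ≤ s * d := by
      rcases le_total d 3 with h | h
      · left
        rw [hs]
        have h31 : 1 ≤ 3 / d := (le_div_iff₀ hd0).2 (by linarith)
        nlinarith [mul_nonneg ht0 (by linarith : (0:ℝ) ≤ 3 / d - 1)]
      · right
        rw [hsd]
        nlinarith [mul_nonneg (by linarith : (0:ℝ) ≤ 1 - (t:ℝ)) (by linarith : (0:ℝ) ≤ d - 3)]
    exact ray_mem hx h1 h2

lemma isPathConnected_UU : IsPathConnected UU := by
  have hq : qq ∈ sphere cc 3 := qq_dist
  have hrank : (1:Cardinal) < Module.rank ℝ E2 :=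
    Module.one_lt_rank_of_one_lt_finrank (by rw [finrank_euclideanSpace_fin]; norm_num)
  have hsph : IsPathConnected (sphere cc 3) := isPathConnected_sphere hrank cc (by norm_num)
  refine ⟨qq, sphere3_subset hq, ?_⟩
  intro y hy
  have hd0 : (0:ℝ) < dist y cc := by
    have := ((mem_UU_iff y).1 hy).2; linarith
  have hPy : cc + (3 / dist y cc) • (y - cc) ∈ sphere cc 3 := by
    rw [mem_sphere, dist_eq_norm, add_sub_cancel_left, norm_smul, Real.norm_eq_abs,
      abs_of_pos (by positivity), ← dist_eq_norm]
    field_simp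
  exact ((hsph.joinedIn _ hq _ hPy).mono sphere3_subset).trans (joined_to_sphere hy).symm

lemma Seg_dist_ge (y : E2) (hy : y ∈ Seg) : 1 ≤ dist y cc := by
  obtain ⟨h0, h1, h2⟩ := (mem_seg_iff y).1 hy
  rw [dist_cc y h0, abs_of_neg (by linarith : y 1 - 2 < 0)]
  linarith

lemma ball_subset_compl : ball cc 1 ⊆ LLᶜ := by
  intro x hx
  rw [mem_ball] at hx
  simp only [LL, mem_compl_iff, mem_union, mem_sphere, not_or]
  exact ⟨fun h => absurd (Seg_dist_ge x h) (by linarith), by linarith⟩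

lemma isClosed_LL : IsClosed LL := by
  apply IsClosed.union
  · rw [Seg, segment_eq_image]
    exact (isCompact_Icc.image (by fun_prop)).isClosed
  · exact isClosed_sphere

lemma isOpen_UU : IsOpen UU := by
  have : UU = LLᶜ ∩ (closedBall cc 1)ᶜ := by
    ext x
    simp only [UU, mem_diff, mem_inter_iff, mem_compl_iff, mem_closedBall, mem_ball,
      not_lt, not_le]
    constructor
    · rintro ⟨hl, hb⟩
      refine ⟨hl, lt_of_le_of_ne hb ?_⟩
      intro h
      exact hl (Or.inr h.symm)
    · rintro ⟨hl, hb⟩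
      exact ⟨hl, by linarith⟩
  rw [this]
  exact isClosed_LL.isOpen_compl.inter isClosed_closedBall.isOpen_compl

lemma compl_eq_union : LLᶜ = ball cc 1 ∪ UU :=
  (union_diff_cancel ball_subset_compl).symm

lemma comp_ball {x : E2} (hx : x ∈ ball cc 1) :
    connectedComponentIn LLᶜ x = ball cc 1 := by
  apply subset_antisymm
  · refine IsPreconnected.subset_left_of_subset_union isOpen_ball isOpen_UU
      (disjoint_sdiff_right) ?_ ⟨x, mem_connectedComponentIn (ball_subset_compl hx), hx⟩
      isPreconnected_connectedComponentIn
    rw [← compl_eq_union]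
    exact connectedComponentIn_subset _ _
  · exact (convex_ball cc 1).isPreconnected.subset_connectedComponentIn hx ball_subset_compl

lemma comp_UU {x : E2} (hx : x ∈ UU) :
    connectedComponentIn LLᶜ x = UU := by
  apply subset_antisymm
  · refine IsPreconnected.subset_right_of_subset_union isOpen_ball isOpen_UU
      (disjoint_sdiff_right) ?_ ⟨x, mem_connectedComponentIn hx.1, hx⟩
      isPreconnected_connectedComponentIn
    rw [← compl_eq_union]
    exact connectedComponentIn_subset _ _
  · exact isPathConnected_UU.isConnected.isPreconnected.subset_connectedComponentIn hx
      (fun y hy => hy.1)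

end

end Stmt5Aux

open Stmt5Aux in
/-- The complement in ℝ² of the lollipop L (segment from (0,0) to (0,1) union the
circle of radius 1 centered at (0,2)) has exactly two connected components: the open
disk of radius 1 centered at (0,2), and the rest (which is distinct from the disk). -/
theorem stmt_5
    (L : Set (EuclideanSpace ℝ (Fin 2)))
    (hL : L = segment ℝ (!₂[0, 0] : EuclideanSpace ℝ (Fin 2)) !₂[0, 1] ∪
        {x : EuclideanSpace ℝ (Fin 2) | dist x !₂[0, 2] = 1})
    (D : Set (EuclideanSpace ℝ (Fin 2)))
    (hD : D = {x : EuclideanSpace ℝ (Fin 2) | dist x !₂[0, 2] < 1}) :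
    (∀ x ∈ Lᶜ, connectedComponentIn Lᶜ x = D ∨ connectedComponentIn Lᶜ x = Lᶜ \ D) ∧
      (∃ x ∈ Lᶜ, connectedComponentIn Lᶜ x = D) ∧
      (∃ x ∈ Lᶜ, connectedComponentIn Lᶜ x = Lᶜ \ D) ∧
      D ≠ Lᶜ \ D := by
  have hLL : L = LL := by rw [hL]; rfl
  have hDb : D = ball cc 1 := by rw [hD]; rfl
  subst hLL hDb
  have hc_mem : cc ∈ ball cc 1 := by simp
  have hq_mem : qq ∈ UU := sphere3_subset qq_dist
  refine ⟨?_, ⟨cc, ball_subset_compl hc_mem, comp_ball hc_mem⟩,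
    ⟨qq, hq_mem.1, comp_UU hq_mem⟩, ?_⟩
  · intro x hx
    rcases (compl_eq_union ▸ hx : x ∈ ball cc 1 ∪ UU) with h | h
    · exact Or.inl (comp_ball h)
    · exact Or.inr (comp_UU h)
  · intro h
    have h2 : cc ∈ LLᶜ \ ball cc 1 := by rw [← h]; exact hc_mem
    exact h2.2 hc_mem
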